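/- Let T_{p,q,r} (p,q,r ≥ 2) be the three-armed tree with n = p+q+r-2 vertices and A its generalized Cartan matrix. If 1/p + 1/q + 1/r = 1 (the affine cases (3,3,3), (2,4,4), (2,3,6)), then A has rank n-1 and its associated quadratic form is positive semidefinite but not positive definite. If 1/p + 1/q + 1/r < 1, then A has rank n and its quadratic form has signature (n-1, 1). -/

import Mathlib

/-!
STATEMENT 4: For the generalized Cartan matrix `A = A(T_{p,q,r})` of the three-armed
tree with `n = p+q+r-2` vertices:
* if `1/p + 1/q + 1/r = 1` then `A` has rank `n-1` and its quadratic form is positive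
  semidefinite but not positive definite;
* if `1/p + 1/q + 1/r < 1` then `A` has rank `n` and its quadratic form has signature
  `(n-1, 1)` (nondegenerate, with an `(n-1)`-dimensional subspace on which it is positive
  and a vector on which it is negative).
-/

/-- Adjacency (as a `Bool`) of the tree `T_{p,q,r}`; vertex `0` is the central vertex,
vertices `1,…,p-1`, `p,…,p+q-2`, `p+q-1,…,p+q+r-3` are the three arms. -/
def tpqrAdjAux (p q r i j : ℕ) : Bool :=
  ((i == 0) && ((j == 1) || (j == p) || (j == p + q - 1))) ||
  ((1 ≤ i) && (i ≤ p - 2) && (j == i + 1)) ||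
  ((p ≤ i) && (i ≤ p + q - 3) && (j == i + 1)) ||
  ((p + q - 1 ≤ i) && (i ≤ p + q + r - 4) && (j == i + 1))

/-- Symmetrized adjacency of `T_{p,q,r}`. -/
def tpqrAdj (p q r i j : ℕ) : Bool :=
  tpqrAdjAux p q r i j || tpqrAdjAux p q r j i

/-- The generalized Cartan matrix `A(T_{p,q,r})`. -/
def cartanT (p q r : ℕ) : Matrix (Fin (p + q + r - 2)) (Fin (p + q + r - 2)) ℤ :=
  fun i j => if i = j then 2 else if tpqrAdj p q r i j then -1 else 0

/-- The associated quadratic form `v ↦ vᵀ A v` over `ℝ`. -/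
def cartanTForm (p q r : ℕ) (v : Fin (p + q + r - 2) → ℝ) : ℝ :=
  ∑ i, ∑ j, v i * ((cartanT p q r i j : ℤ) : ℝ) * v j

/-- Quadratic form of one arm: `y 0` is the center value. -/
noncomputable def Dform (m : ℕ) (y : ℕ → ℝ) : ℝ :=
  (∑ k ∈ Finset.range m, (y k - y (k+1))^2) + (y m)^2

/-- Sum-of-squares remainder. -/
noncomputable def Sform (m : ℕ) (y : ℕ → ℝ) : ℝ :=
  ∑ k ∈ Finset.range m,
    (((m:ℝ) - k + 1)/((m:ℝ) - k)) * (y (k+1) - (((m:ℝ) - k)/((m:ℝ) - k + 1)) * y k)^2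

lemma Dform_eq (m : ℕ) : ∀ y : ℕ → ℝ, Dform m y = (y 0)^2/(m+1) + Sform m y := by
  induction m with
  | zero => intro y; simp [Dform, Sform]
  | succ m ih =>
    intro y
    have h1 : Dform (m+1) y = (y 0 - y 1)^2 + Dform m (fun k => y (k+1)) := by
      simp only [Dform, Finset.sum_range_succ']
      ring
    have h2 : Sform (m+1) y
        = (((m:ℝ)+2)/((m:ℝ)+1)) * (y 1 - (((m:ℝ)+1)/((m:ℝ)+2)) * y 0)^2
          + Sform m (fun k => y (k+1)) := by
      simp only [Sform, Finset.sum_range_succ']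
      push_cast
      have : ∀ k ∈ Finset.range m,
          (((m:ℝ)+1 - (k+1) + 1)/(((m:ℝ)+1) - (k+1))) *
            (y (k+1+1) - ((((m:ℝ)+1) - (k+1))/(((m:ℝ)+1) - (k+1) + 1)) * y (k+1))^2
          = (((m:ℝ) - k + 1)/((m:ℝ) - k)) *
            (y (k+1+1) - (((m:ℝ) - k)/((m:ℝ) - k + 1)) * y (k+1))^2 := by
        intro k hk
        ring_nf
      rw [Finset.sum_congr rfl this]
      ring
    rw [h1, ih, h2]
    have hm1 : ((m:ℝ)+1) ≠ 0 := by positivity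
    have hm2 : ((m:ℝ)+2) ≠ 0 := by positivity
    push_cast
    field_simp
    ring

lemma Sform_nonneg (m : ℕ) (y : ℕ → ℝ) : 0 ≤ Sform m y := by
  apply Finset.sum_nonneg
  intro k hk
  have hk' : (k:ℝ) + 1 ≤ m := by
    exact_mod_cast Nat.succ_le_of_lt (Finset.mem_range.mp hk)
  have h1 : (0:ℝ) < (m:ℝ) - k := by linarith
  positivity

lemma Dform_ge (m : ℕ) (y : ℕ → ℝ) : (y 0)^2/(m+1) ≤ Dform m y := by
  rw [Dform_eq]
  linarith [Sform_nonneg m y]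

lemma Dform_eq_imp (m : ℕ) (y : ℕ → ℝ) (h : Dform m y = (y 0)^2/(m+1)) :
    ∀ k ≤ m, y k = (((m:ℝ)+1-k)/((m:ℝ)+1)) * y 0 := by
  rw [Dform_eq] at h
  have hS : Sform m y = 0 := by linarith
  have hterm : ∀ k ∈ Finset.range m,
      y (k+1) = (((m:ℝ) - k)/((m:ℝ) - k + 1)) * y k := by
    intro k hk
    have hall := (Finset.sum_eq_zero_iff_of_nonneg (fun k hk => by
      have hk' : (k:ℝ) + 1 ≤ m := by
        exact_mod_cast Nat.succ_le_of_lt (Finset.mem_range.mp hk)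
      have h1 : (0:ℝ) < (m:ℝ) - k := by linarith
      positivity)).mp hS k hk
    have hk' : (k:ℝ) + 1 ≤ m := by
      exact_mod_cast Nat.succ_le_of_lt (Finset.mem_range.mp hk)
    have h1 : (0:ℝ) < (m:ℝ) - k := by linarith
    have h2 : (0:ℝ) < ((m:ℝ) - k + 1)/((m:ℝ) - k) := by positivity
    have h3 : (y (k+1) - (((m:ℝ) - k)/((m:ℝ) - k + 1)) * y k)^2 = 0 := by
      by_contra hne
      have := mul_ne_zero (ne_of_gt h2) hne
      exact this hall
    have := pow_eq_zero_iff (n := 2) (by norm_num) |>.mp h3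
    linarith
  intro k hk
  induction k with
  | zero => rw [Nat.cast_zero, sub_zero, div_self (by positivity : ((m:ℝ)+1) ≠ 0), one_mul]
  | succ k ihk =>
    have hkm : k < m := Nat.lt_of_succ_le hk
    have hy := hterm k (Finset.mem_range.mpr hkm)
    rw [ihk (Nat.le_of_lt hkm)] at hy
    rw [hy]
    have hkr : (k:ℝ) + 1 ≤ m := by exact_mod_cast Nat.succ_le_of_lt hkm
    have h1 : ((m:ℝ) - k + 1) ≠ 0 := by intro h'; linarith
    have h2 : ((m:ℝ) + 1) ≠ 0 := by positivity
    push_cast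
    field_simp
    ring

lemma Dform_interp (m : ℕ) (c : ℝ) (y : ℕ → ℝ)
    (h : ∀ k ≤ m, y k = (((m:ℝ)+1-k)/((m:ℝ)+1)) * c) :
    Dform m y = c^2/(m+1) := by
  have hm : ((m:ℝ)+1) ≠ 0 := by positivity
  have hdiff : ∀ k ∈ Finset.range m, (y k - y (k+1))^2 = (c/((m:ℝ)+1))^2 := by
    intro k hk
    have hk' : k < m := Finset.mem_range.mp hk
    rw [h k (le_of_lt hk'), h (k+1) hk']
    push_cast
    field_simp
    ring
  rw [Dform, Finset.sum_congr rfl hdiff, Finset.sum_const, h m le_rfl]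
  simp only [Finset.card_range, nsmul_eq_mul]
  field_simp
  ring

lemma Dform_expand (m : ℕ) (y : ℕ → ℝ) :
    Dform m y = (y 0)^2 + 2 * (∑ k ∈ Finset.Ico 1 (m+1), (y k)^2)
      - 2 * (∑ k ∈ Finset.range m, y k * y (k+1)) := by
  induction m with
  | zero => simp [Dform]
  | succ m ih =>
    have h1 : Dform (m+1) y = Dform m y - (y m)^2 + (y m - y (m+1))^2 + (y (m+1))^2 := by
      simp only [Dform, Finset.sum_range_succ]
      ring
    rw [h1, ih, Finset.sum_Ico_succ_top (by omega : 1 ≤ m+1) (fun k => (y k)^2),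
      Finset.sum_range_succ]
    ring

section TreeCore
variable (p q r : ℕ)

lemma aux_iff (i j : ℕ) : tpqrAdjAux p q r i j = true ↔
    (i = 0 ∧ (j = 1 ∨ j = p ∨ j = p + q - 1)) ∨
    ((1 ≤ i ∧ i ≤ p - 2) ∧ j = i + 1) ∨
    ((p ≤ i ∧ i ≤ p + q - 3) ∧ j = i + 1) ∨
    ((p + q - 1 ≤ i ∧ i ≤ p + q + r - 4) ∧ j = i + 1) := by
  simp only [tpqrAdjAux, Bool.or_eq_true, Bool.and_eq_true, beq_iff_eq,
    decide_eq_true_eq]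
  tauto

lemma aux_lt (hp : 2 ≤ p) (hq : 2 ≤ q) (i j : ℕ) (h : tpqrAdjAux p q r i j = true) :
    i < j := by
  rw [aux_iff p q r] at h
  omega

/-- extension of `v` to `ℕ` by zero -/
def tvv (v : Fin (p + q + r - 2) → ℝ) (i : ℕ) : ℝ :=
  if h : i < p + q + r - 2 then v ⟨i, h⟩ else 0

def ty2 (v : Fin (p + q + r - 2) → ℝ) (k : ℕ) : ℝ :=
  if k = 0 then tvv p q r v 0 else tvv p q r v (p + k - 1)

def ty3 (v : Fin (p + q + r - 2) → ℝ) (k : ℕ) : ℝ :=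
  if k = 0 then tvv p q r v 0 else tvv p q r v (p + q - 2 + k)

lemma tvv_coe (v : Fin (p + q + r - 2) → ℝ) (i : Fin (p + q + r - 2)) :
    tvv p q r v i = v i := by
  simp [tvv]

end TreeCore

section TreeCore2
variable (p q r : ℕ) (hp : 2 ≤ p) (hq : 2 ≤ q) (hr : 2 ≤ r)

include hp hq

lemma entry_eq (v : Fin (p + q + r - 2) → ℝ) (i j : Fin (p + q + r - 2)) :
    v i * ((cartanT p q r i j : ℤ) : ℝ) * v j
    = (if i = j then 2 * (v i * v j) else 0)
      + (if tpqrAdjAux p q r i j = true then -(v i * v j) else 0)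
      + (if tpqrAdjAux p q r j i = true then -(v i * v j) else 0) := by
  unfold cartanT tpqrAdj
  by_cases hij : i = j
  · subst hij
    have h1 : ¬ (tpqrAdjAux p q r i i = true) := by
      intro h
      have := aux_lt p q r hp hq i i h
      omega
    simp only [if_pos rfl, if_neg h1]
    push_cast
    ring
  · by_cases h1 : tpqrAdjAux p q r i j = true
    · have h2 : ¬ (tpqrAdjAux p q r j i = true) := by
        intro h2
        have l1 := aux_lt p q r hp hq i j h1
        have l2 := aux_lt p q r hp hq j i h2
        omega
      have hadj : (tpqrAdjAux p q r i j || tpqrAdjAux p q r j i) = true := by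
        simp [h1]
      simp only [if_neg hij, if_pos h1, if_neg h2, if_pos hadj]
      push_cast
      ring
    · by_cases h2 : tpqrAdjAux p q r j i = true
      · have hadj : (tpqrAdjAux p q r i j || tpqrAdjAux p q r j i) = true := by
          simp [h2]
        simp only [if_neg hij, if_neg h1, if_pos h2, if_pos hadj]
        push_cast
        ring
      · have hadj : ¬ ((tpqrAdjAux p q r i j || tpqrAdjAux p q r j i) = true) := by
          simp only [Bool.or_eq_true]
          rintro (hh | hh)
          · exact h1 hh
          · exact h2 hh
        simp only [if_neg hij, if_neg h1, if_neg h2, if_neg hadj]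
        push_cast
        ring

lemma form_eq_sub (v : Fin (p + q + r - 2) → ℝ) :
    cartanTForm p q r v
    = 2 * (∑ i ∈ Finset.range (p+q+r-2), (tvv p q r v i)^2)
      - 2 * (∑ i ∈ Finset.range (p+q+r-2), ∑ j ∈ Finset.range (p+q+r-2),
          if tpqrAdjAux p q r i j = true then tvv p q r v i * tvv p q r v j else 0) := by
  have step1 : cartanTForm p q r v
      = (∑ i : Fin (p+q+r-2), ∑ j : Fin (p+q+r-2), if i = j then 2 * (v i * v j) else 0)
        + (∑ i : Fin (p+q+r-2), ∑ j : Fin (p+q+r-2),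
            if tpqrAdjAux p q r (i:ℕ) (j:ℕ) = true then -(v i * v j) else 0)
        + (∑ i : Fin (p+q+r-2), ∑ j : Fin (p+q+r-2),
            if tpqrAdjAux p q r (j:ℕ) (i:ℕ) = true then -(v i * v j) else 0) := by
    unfold cartanTForm
    rw [← Finset.sum_add_distrib, ← Finset.sum_add_distrib]
    apply Finset.sum_congr rfl
    intro i _
    rw [← Finset.sum_add_distrib, ← Finset.sum_add_distrib]
    apply Finset.sum_congr rfl
    intro j _
    exact entry_eq p q r hp hq v i j
  have hdiag : (∑ i : Fin (p+q+r-2), ∑ j : Fin (p+q+r-2), if i = j then 2 * (v i * v j) else 0)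
      = 2 * (∑ i ∈ Finset.range (p+q+r-2), (tvv p q r v i)^2) := by
    rw [Finset.mul_sum]
    rw [← Fin.sum_univ_eq_sum_range (fun i => 2 * (tvv p q r v i)^2)]
    apply Finset.sum_congr rfl
    intro i _
    rw [Finset.sum_ite_eq (Finset.univ) i (fun j => 2 * (v i * v j))]
    simp only [Finset.mem_univ, if_true, tvv_coe]
    ring
  have hswap : (∑ i : Fin (p+q+r-2), ∑ j : Fin (p+q+r-2),
        if tpqrAdjAux p q r (j:ℕ) (i:ℕ) = true then -(v i * v j) else 0)
      = (∑ i : Fin (p+q+r-2), ∑ j : Fin (p+q+r-2),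
        if tpqrAdjAux p q r (i:ℕ) (j:ℕ) = true then -(v i * v j) else 0) := by
    rw [Finset.sum_comm]
    apply Finset.sum_congr rfl; intro i _
    apply Finset.sum_congr rfl; intro j _
    split_ifs <;> ring
  have hT : (∑ i : Fin (p+q+r-2), ∑ j : Fin (p+q+r-2),
        if tpqrAdjAux p q r (i:ℕ) (j:ℕ) = true then -(v i * v j) else 0)
      = - (∑ i ∈ Finset.range (p+q+r-2), ∑ j ∈ Finset.range (p+q+r-2),
          if tpqrAdjAux p q r i j = true then tvv p q r v i * tvv p q r v j else 0) := by
    rw [← Fin.sum_univ_eq_sum_range (fun i => ∑ j ∈ Finset.range (p+q+r-2),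
          if tpqrAdjAux p q r i j = true then tvv p q r v i * tvv p q r v j else 0)]
    rw [← Finset.sum_neg_distrib]
    apply Finset.sum_congr rfl
    intro i _
    rw [← Fin.sum_univ_eq_sum_range (fun j =>
          if tpqrAdjAux p q r (i:ℕ) j = true then tvv p q r v (i:ℕ) * tvv p q r v j else 0)]
    rw [← Finset.sum_neg_distrib]
    apply Finset.sum_congr rfl
    intro j _
    simp only [tvv_coe]
    split_ifs <;> ring
  rw [step1, hswap, hT, hdiag]
  ring

lemma T_eval (f : ℕ → ℝ) (hr : 2 ≤ r) :
    (∑ i ∈ Finset.range (p+q+r-2), ∑ j ∈ Finset.range (p+q+r-2),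
        if tpqrAdjAux p q r i j = true then f i * f j else 0)
    = f 0 * f 1 + f 0 * f p + f 0 * f (p+q-1)
      + (∑ k ∈ Finset.range (p-2), f (1+k) * f (1+k+1))
      + (∑ k ∈ Finset.range (q-2), f (p+k) * f (p+k+1))
      + (∑ k ∈ Finset.range (r-2), f (p+q-1+k) * f (p+q-1+k+1)) := by
  have inner : ∀ i ∈ Finset.range (p+q+r-2),
      (∑ j ∈ Finset.range (p+q+r-2), if tpqrAdjAux p q r i j = true then f i * f j else 0)
      = (if i = 0 then f 0 * f 1 + f 0 * f p + f 0 * f (p+q-1) else 0)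
        + (if 1 ≤ i ∧ i ≤ p-2 then f i * f (i+1) else 0)
        + (if p ≤ i ∧ i ≤ p+q-3 then f i * f (i+1) else 0)
        + (if p+q-1 ≤ i ∧ i ≤ p+q+r-4 then f i * f (i+1) else 0) := by
    intro i hi
    rw [Finset.mem_range] at hi
    by_cases hi0 : i = 0
    · subst hi0
      have hc : ∀ j, (tpqrAdjAux p q r 0 j = true) ↔ (j = 1 ∨ j = p ∨ j = p+q-1) := by
        intro j; rw [aux_iff]; omega
      have hsplit : ∀ j, (if (j = 1 ∨ j = p ∨ j = p+q-1) then f 0 * f j else 0)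
          = (if j = 1 then f 0 * f j else 0) + (if j = p then f 0 * f j else 0)
            + (if j = p+q-1 then f 0 * f j else 0) := by
        intro j
        split_ifs <;> first | omega | ring
      simp only [hc, hsplit]
      rw [Finset.sum_add_distrib, Finset.sum_add_distrib,
        Finset.sum_ite_eq' (Finset.range (p+q+r-2)) 1 (fun j => f 0 * f j),
        Finset.sum_ite_eq' (Finset.range (p+q+r-2)) p (fun j => f 0 * f j),
        Finset.sum_ite_eq' (Finset.range (p+q+r-2)) (p+q-1) (fun j => f 0 * f j)]
      rw [if_pos (Finset.mem_range.mpr (by omega)), if_pos (Finset.mem_range.mpr (by omega)),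
        if_pos (Finset.mem_range.mpr (by omega))]
      rw [if_pos trivial, if_neg (by omega), if_neg (by omega), if_neg (by omega)]
      ring
    · by_cases hr1 : (1 ≤ i ∧ i ≤ p-2) ∨ (p ≤ i ∧ i ≤ p+q-3) ∨ (p+q-1 ≤ i ∧ i ≤ p+q+r-4)
      · have hc : ∀ j, (tpqrAdjAux p q r i j = true) ↔ (j = i+1) := by
          intro j; rw [aux_iff]; omega
        simp only [hc]
        rw [Finset.sum_ite_eq' (Finset.range (p+q+r-2)) (i+1) (fun j => f i * f j)]
        rw [if_pos (Finset.mem_range.mpr (by omega))]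
        rw [if_neg hi0]
        rcases hr1 with h | h | h
        · rw [if_pos h, if_neg (by omega), if_neg (by omega)]; ring
        · rw [if_neg (by omega), if_pos h, if_neg (by omega)]; ring
        · rw [if_neg (by omega), if_neg (by omega), if_pos h]; ring
      · have hc : ∀ j, ¬ (tpqrAdjAux p q r i j = true) := by
          intro j h
          rw [aux_iff] at h
          omega
        rw [Finset.sum_eq_zero (fun j _ => by rw [if_neg (hc j)])]
        rw [if_neg hi0, if_neg (by omega), if_neg (by omega), if_neg (by omega)]
        ring
  rw [Finset.sum_congr rfl inner]
  rw [Finset.sum_add_distrib, Finset.sum_add_distrib, Finset.sum_add_distrib]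
  rw [Finset.sum_ite_eq' (Finset.range (p+q+r-2)) 0
    (fun _ => f 0 * f 1 + f 0 * f p + f 0 * f (p+q-1))]
  rw [if_pos (Finset.mem_range.mpr (by omega))]
  have e1 : (∑ i ∈ Finset.range (p+q+r-2), if 1 ≤ i ∧ i ≤ p-2 then f i * f (i+1) else 0)
      = ∑ k ∈ Finset.range (p-2), f (1+k) * f (1+k+1) := by
    rw [Finset.sum_ite, Finset.sum_const_zero, add_zero]
    have : Finset.filter (fun i => 1 ≤ i ∧ i ≤ p-2) (Finset.range (p+q+r-2))
        = Finset.Ico 1 (p-1) := by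
      ext i; simp only [Finset.mem_filter, Finset.mem_range, Finset.mem_Ico]; omega
    rw [this, Finset.sum_Ico_eq_sum_range]
    have : p - 1 - 1 = p - 2 := by omega
    rw [this]
  have e2 : (∑ i ∈ Finset.range (p+q+r-2), if p ≤ i ∧ i ≤ p+q-3 then f i * f (i+1) else 0)
      = ∑ k ∈ Finset.range (q-2), f (p+k) * f (p+k+1) := by
    rw [Finset.sum_ite, Finset.sum_const_zero, add_zero]
    have : Finset.filter (fun i => p ≤ i ∧ i ≤ p+q-3) (Finset.range (p+q+r-2))
        = Finset.Ico p (p+q-2) := by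
      ext i; simp only [Finset.mem_filter, Finset.mem_range, Finset.mem_Ico]; omega
    rw [this, Finset.sum_Ico_eq_sum_range]
    have : p + q - 2 - p = q - 2 := by omega
    rw [this]
  have e3 : (∑ i ∈ Finset.range (p+q+r-2),
        if p+q-1 ≤ i ∧ i ≤ p+q+r-4 then f i * f (i+1) else 0)
      = ∑ k ∈ Finset.range (r-2), f (p+q-1+k) * f (p+q-1+k+1) := by
    rw [Finset.sum_ite, Finset.sum_const_zero, add_zero]
    have : Finset.filter (fun i => p+q-1 ≤ i ∧ i ≤ p+q+r-4) (Finset.range (p+q+r-2))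
        = Finset.Ico (p+q-1) (p+q+r-3) := by
      ext i; simp only [Finset.mem_filter, Finset.mem_range, Finset.mem_Ico]; omega
    rw [this, Finset.sum_Ico_eq_sum_range]
    have : p + q + r - 3 - (p+q-1) = r - 2 := by omega
    rw [this]
  rw [e1, e2, e3]

end TreeCore2

section Main
variable (p q r : ℕ) (hp : 2 ≤ p) (hq : 2 ≤ q) (hr : 2 ≤ r)

include hp hq hr

lemma ty2_succ (v : Fin (p + q + r - 2) → ℝ) (k : ℕ) :
    ty2 p q r v (k+1) = tvv p q r v (p + k) := by
  rw [ty2, if_neg (Nat.succ_ne_zero k)]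
  congr 1

lemma ty3_succ (v : Fin (p + q + r - 2) → ℝ) (k : ℕ) :
    ty3 p q r v (k+1) = tvv p q r v (p + q - 1 + k) := by
  rw [ty3, if_neg (Nat.succ_ne_zero k)]
  congr 1
  omega

lemma form_eq (v : Fin (p + q + r - 2) → ℝ) :
    cartanTForm p q r v
    = Dform (p-1) (tvv p q r v) + Dform (q-1) (ty2 p q r v) + Dform (r-1) (ty3 p q r v)
      - (tvv p q r v 0)^2 := by
  set f := tvv p q r v with hf
  -- split the sum of squares into the three arms
  have hsq : (∑ i ∈ Finset.range (p+q+r-2), (f i)^2)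
      = (f 0)^2 + (∑ k ∈ Finset.range (p-1), (f (1+k))^2)
        + (∑ k ∈ Finset.range (q-1), (f (p+k))^2)
        + (∑ k ∈ Finset.range (r-1), (f (p+q-1+k))^2) := by
    rw [Finset.range_eq_Ico,
      ← Finset.sum_Ico_consecutive (fun i => (f i)^2) (by omega : (0:ℕ) ≤ 1) (by omega : 1 ≤ p+q+r-2),
      ← Finset.sum_Ico_consecutive (fun i => (f i)^2) (by omega : (1:ℕ) ≤ p) (by omega : p ≤ p+q+r-2),
      ← Finset.sum_Ico_consecutive (fun i => (f i)^2) (by omega : p ≤ p+q-1) (by omega : p+q-1 ≤ p+q+r-2)]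
    rw [Finset.sum_Ico_eq_sum_range (f := fun i => (f i)^2) (m := 0),
      Finset.sum_Ico_eq_sum_range (f := fun i => (f i)^2) (m := 1),
      Finset.sum_Ico_eq_sum_range (f := fun i => (f i)^2) (m := p),
      Finset.sum_Ico_eq_sum_range (f := fun i => (f i)^2) (m := p+q-1)]
    have c1 : (1:ℕ) - 0 = 1 := rfl
    have c2 : p - 1 = p - 1 := rfl
    have c3 : p + q - 1 - p = q - 1 := by omega
    have c4 : p + q + r - 2 - (p+q-1) = r - 1 := by omega
    rw [c3, c4]
    norm_num
    ring
  -- arm 1 expansion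
  have hD1 : Dform (p-1) f
      = (f 0)^2 + 2 * (∑ k ∈ Finset.range (p-1), (f (1+k))^2)
        - 2 * (f 0 * f 1 + ∑ k ∈ Finset.range (p-2), f (1+k) * f (1+k+1)) := by
    rw [Dform_expand]
    have e1 : (∑ k ∈ Finset.Ico 1 (p-1+1), (f k)^2) = ∑ k ∈ Finset.range (p-1), (f (1+k))^2 := by
      rw [Finset.sum_Ico_eq_sum_range]
      congr 1
    have e2 : (∑ k ∈ Finset.range (p-1), f k * f (k+1))
        = f 0 * f 1 + ∑ k ∈ Finset.range (p-2), f (1+k) * f (1+k+1) := by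
      have hp1 : p - 1 = (p-2)+1 := by omega
      rw [hp1, Finset.sum_range_succ']
      have : ∀ k ∈ Finset.range (p-2), f (k+1) * f (k+1+1) = f (1+k) * f (1+k+1) := by
        intro k _
        rw [Nat.add_comm 1 k]
      rw [Finset.sum_congr rfl this]
      ring
    rw [e1, e2]
  -- arm 2 expansion
  have hD2 : Dform (q-1) (ty2 p q r v)
      = (f 0)^2 + 2 * (∑ k ∈ Finset.range (q-1), (f (p+k))^2)
        - 2 * (f 0 * f p + ∑ k ∈ Finset.range (q-2), f (p+k) * f (p+k+1)) := by
    rw [Dform_expand]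
    have h0 : ty2 p q r v 0 = f 0 := by rw [ty2, if_pos rfl]
    have e1 : (∑ k ∈ Finset.Ico 1 (q-1+1), (ty2 p q r v k)^2)
        = ∑ k ∈ Finset.range (q-1), (f (p+k))^2 := by
      rw [Finset.sum_Ico_eq_sum_range]
      apply Finset.sum_congr (by congr 1)
      intro k _
      rw [Nat.add_comm 1 k, ty2_succ p q r hp hq hr]
    have e2 : (∑ k ∈ Finset.range (q-1), ty2 p q r v k * ty2 p q r v (k+1))
        = f 0 * f p + ∑ k ∈ Finset.range (q-2), f (p+k) * f (p+k+1) := by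
      have hq1 : q - 1 = (q-2)+1 := by omega
      rw [hq1, Finset.sum_range_succ']
      have : ∀ k ∈ Finset.range (q-2), ty2 p q r v (k+1) * ty2 p q r v (k+1+1)
          = f (p+k) * f (p+k+1) := by
        intro k _
        rw [ty2_succ p q r hp hq hr, ty2_succ p q r hp hq hr]
        congr 2
      rw [Finset.sum_congr rfl this, h0, ty2_succ p q r hp hq hr]
      rw [Nat.add_zero]
      ring
    rw [e1, e2, h0]
  -- arm 3 expansion
  have hD3 : Dform (r-1) (ty3 p q r v)
      = (f 0)^2 + 2 * (∑ k ∈ Finset.range (r-1), (f (p+q-1+k))^2)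
        - 2 * (f 0 * f (p+q-1) + ∑ k ∈ Finset.range (r-2), f (p+q-1+k) * f (p+q-1+k+1)) := by
    rw [Dform_expand]
    have h0 : ty3 p q r v 0 = f 0 := by rw [ty3, if_pos rfl]
    have e1 : (∑ k ∈ Finset.Ico 1 (r-1+1), (ty3 p q r v k)^2)
        = ∑ k ∈ Finset.range (r-1), (f (p+q-1+k))^2 := by
      rw [Finset.sum_Ico_eq_sum_range]
      apply Finset.sum_congr (by congr 1)
      intro k _
      rw [Nat.add_comm 1 k, ty3_succ p q r hp hq hr]
    have e2 : (∑ k ∈ Finset.range (r-1), ty3 p q r v k * ty3 p q r v (k+1))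
        = f 0 * f (p+q-1) + ∑ k ∈ Finset.range (r-2), f (p+q-1+k) * f (p+q-1+k+1) := by
      have hr1 : r - 1 = (r-2)+1 := by omega
      rw [hr1, Finset.sum_range_succ']
      have : ∀ k ∈ Finset.range (r-2), ty3 p q r v (k+1) * ty3 p q r v (k+1+1)
          = f (p+q-1+k) * f (p+q-1+k+1) := by
        intro k _
        rw [ty3_succ p q r hp hq hr, ty3_succ p q r hp hq hr]
        congr 2
      rw [Finset.sum_congr rfl this, h0, ty3_succ p q r hp hq hr]
      rw [Nat.add_zero]
      ring
    rw [e1, e2, h0]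
  rw [form_eq_sub p q r hp hq v, T_eval p q r hp hq f hr, hsq, hD1, hD2, hD3]
  ring

/-- the interpolation vector: linear on each arm, value 1 at the center. -/
noncomputable def wvec : Fin (p+q+r-2) → ℝ := fun i =>
  if (i:ℕ) < p then ((p:ℝ) - i)/p
  else if (i:ℕ) < p+q-1 then ((p:ℝ)+(q:ℝ)-1-i)/q
  else ((p:ℝ)+(q:ℝ)+(r:ℝ)-2-i)/r

lemma tvv_zero (v : Fin (p + q + r - 2) → ℝ) :
    tvv p q r v 0 = v ⟨0, by omega⟩ := by
  rw [tvv, dif_pos (by omega : 0 < p+q+r-2)]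

lemma castp : ((p-1 : ℕ):ℝ) + 1 = (p:ℝ) := by
  rw [Nat.cast_sub (by omega : 1 ≤ p)]; norm_num

lemma castq : ((q-1 : ℕ):ℝ) + 1 = (q:ℝ) := by
  rw [Nat.cast_sub (by omega : 1 ≤ q)]; norm_num

lemma castr : ((r-1 : ℕ):ℝ) + 1 = (r:ℝ) := by
  rw [Nat.cast_sub (by omega : 1 ≤ r)]; norm_num

lemma warm1 (k : ℕ) (hk : k ≤ p - 1) :
    tvv p q r (wvec p q r) k = ((p:ℝ) - k)/p := by
  rw [tvv, dif_pos (by omega : k < p+q+r-2)]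
  rw [wvec, if_pos (by simpa using (by omega : k < p))]

lemma warm2 (k : ℕ) (hk : k ≤ q - 1) :
    ty2 p q r (wvec p q r) k = ((q:ℝ) - k)/q := by
  rcases Nat.eq_zero_or_pos k with hk0 | hk0
  · subst hk0
    rw [ty2, if_pos rfl, tvv, dif_pos (by omega : 0 < p+q+r-2)]
    rw [wvec]
    simp only [Fin.val_mk] -- index 0
    rw [if_pos (by simpa using (by omega : 0 < p))]
    rw [Nat.cast_zero]
    simp only [sub_zero]
    rw [div_self (by positivity : (p:ℝ) ≠ 0), div_self (by positivity : (q:ℝ) ≠ 0)]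
  · rw [ty2, if_neg (by omega), tvv, dif_pos (by omega : p + k - 1 < p+q+r-2)]
    rw [wvec]
    have hv : ((⟨p+k-1, by omega⟩ : Fin (p+q+r-2)) : ℕ) = p+k-1 := rfl
    rw [hv, if_neg (by omega), if_pos (by omega : p+k-1 < p+q-1)]
    have : ((p+k-1 : ℕ):ℝ) = (p:ℝ) + k - 1 := by
      rw [Nat.cast_sub (by omega : 1 ≤ p+k)]
      push_cast; ring
    rw [this]
    ring_nf

lemma warm3 (k : ℕ) (hk : k ≤ r - 1) :
    ty3 p q r (wvec p q r) k = ((r:ℝ) - k)/r := by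
  rcases Nat.eq_zero_or_pos k with hk0 | hk0
  · subst hk0
    rw [ty3, if_pos rfl, tvv, dif_pos (by omega : 0 < p+q+r-2)]
    rw [wvec]
    simp only [Fin.val_mk]
    rw [if_pos (by simpa using (by omega : 0 < p))]
    rw [Nat.cast_zero]
    simp only [sub_zero]
    rw [div_self (by positivity : (p:ℝ) ≠ 0), div_self (by positivity : (r:ℝ) ≠ 0)]
  · rw [ty3, if_neg (by omega), tvv, dif_pos (by omega : p + q - 2 + k < p+q+r-2)]
    rw [wvec]
    have hv : ((⟨p+q-2+k, by omega⟩ : Fin (p+q+r-2)) : ℕ) = p+q-2+k := rfl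
    rw [hv, if_neg (by omega), if_neg (by omega)]
    have : ((p+q-2+k : ℕ):ℝ) = (p:ℝ) + q - 2 + k := by
      rw [Nat.cast_add, Nat.cast_sub (by omega : 2 ≤ p+q)]
      push_cast; ring
    rw [this]
    ring_nf

lemma w0 : tvv p q r (wvec p q r) 0 = 1 := by
  rw [warm1 p q r hp hq hr 0 (by omega)]
  rw [Nat.cast_zero, sub_zero, div_self (by positivity : (p:ℝ) ≠ 0)]

lemma form_w : cartanTForm p q r (wvec p q r)
    = 1/(p:ℝ) + 1/(q:ℝ) + 1/(r:ℝ) - 1 := by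
  rw [form_eq p q r hp hq hr]
  rw [Dform_interp (p-1) 1 _ (fun k hk => by
    rw [castp p q r hp hq hr, warm1 p q r hp hq hr k hk]; ring)]
  rw [Dform_interp (q-1) 1 _ (fun k hk => by
    rw [castq p q r hp hq hr, warm2 p q r hp hq hr k hk]; ring)]
  rw [Dform_interp (r-1) 1 _ (fun k hk => by
    rw [castr p q r hp hq hr, warm3 p q r hp hq hr k hk]; ring)]
  rw [w0 p q r hp hq hr, castp p q r hp hq hr, castq p q r hp hq hr, castr p q r hp hq hr]
  norm_num

lemma form_ge (v : Fin (p + q + r - 2) → ℝ) :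
    (1/(p:ℝ) + 1/(q:ℝ) + 1/(r:ℝ) - 1) * (tvv p q r v 0)^2 ≤ cartanTForm p q r v := by
  have g1 := Dform_ge (p-1) (tvv p q r v)
  have g2 := Dform_ge (q-1) (ty2 p q r v)
  have g3 := Dform_ge (r-1) (ty3 p q r v)
  rw [castp p q r hp hq hr] at g1
  rw [castq p q r hp hq hr] at g2
  rw [castr p q r hp hq hr] at g3
  have hy2 : ty2 p q r v 0 = tvv p q r v 0 := if_pos rfl
  have hy3 : ty3 p q r v 0 = tvv p q r v 0 := if_pos rfl
  rw [hy2] at g2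
  rw [hy3] at g3
  rw [form_eq p q r hp hq hr]
  have hp0 : (0:ℝ) < p := by positivity
  have hq0 : (0:ℝ) < q := by positivity
  have hr0 : (0:ℝ) < r := by positivity
  have key : (1/(p:ℝ) + 1/(q:ℝ) + 1/(r:ℝ) - 1) * (tvv p q r v 0)^2
      = (tvv p q r v 0)^2/p + (tvv p q r v 0)^2/q + (tvv p q r v 0)^2/r
        - (tvv p q r v 0)^2 := by
    field_simp
  linarith

lemma form_tight (v : Fin (p + q + r - 2) → ℝ)
    (h : cartanTForm p q r v
      = (1/(p:ℝ) + 1/(q:ℝ) + 1/(r:ℝ) - 1) * (tvv p q r v 0)^2) :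
    ∀ i, v i = tvv p q r v 0 * wvec p q r i := by
  set c := tvv p q r v 0 with hc
  have g1 := Dform_ge (p-1) (tvv p q r v)
  have g2 := Dform_ge (q-1) (ty2 p q r v)
  have g3 := Dform_ge (r-1) (ty3 p q r v)
  rw [castp p q r hp hq hr] at g1
  rw [castq p q r hp hq hr] at g2
  rw [castr p q r hp hq hr] at g3
  have hy2 : ty2 p q r v 0 = c := if_pos rfl
  have hy3 : ty3 p q r v 0 = c := if_pos rfl
  rw [hy2] at g2
  rw [hy3] at g3
  rw [form_eq p q r hp hq hr] at h
  have hp0 : (0:ℝ) < p := by positivity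
  have hq0 : (0:ℝ) < q := by positivity
  have hr0 : (0:ℝ) < r := by positivity
  have key : (1/(p:ℝ) + 1/(q:ℝ) + 1/(r:ℝ) - 1) * c^2
      = c^2/p + c^2/q + c^2/r - c^2 := by
    field_simp
  have e1 : Dform (p-1) (tvv p q r v) = c^2/p := by linarith
  have e2 : Dform (q-1) (ty2 p q r v) = c^2/q := by linarith
  have e3 : Dform (r-1) (ty3 p q r v) = c^2/r := by linarith
  have a1 := Dform_eq_imp (p-1) (tvv p q r v)
    (by rw [castp p q r hp hq hr]; exact e1)
  have a2 := Dform_eq_imp (q-1) (ty2 p q r v)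
    (by rw [castq p q r hp hq hr, hy2]; exact e2)
  have a3 := Dform_eq_imp (r-1) (ty3 p q r v)
    (by rw [castr p q r hp hq hr, hy3]; exact e3)
  simp only [castp p q r hp hq hr] at a1
  simp only [castq p q r hp hq hr, hy2] at a2
  simp only [castr p q r hp hq hr, hy3] at a3
  intro i
  rcases lt_or_ge (i:ℕ) p with hip | hip
  · have := a1 (i:ℕ) (by omega)
    rw [tvv_coe] at this
    rw [this, wvec, if_pos (by simpa using hip)]
    ring
  · rcases lt_or_ge (i:ℕ) (p+q-1) with hiq | hiq
    · have hk := a2 ((i:ℕ)-p+1) (by omega)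
      rw [ty2, if_neg (by omega)] at hk
      have hidx : p + ((i:ℕ)-p+1) - 1 = (i:ℕ) := by omega
      rw [hidx] at hk
      rw [← tvv_coe p q r v i, hk, wvec, if_neg (by omega), if_pos (by simpa using hiq)]
      have hcast : (((i:ℕ)-p+1 : ℕ):ℝ) = (i:ℝ) - p + 1 := by
        rw [Nat.cast_add, Nat.cast_sub (by omega : p ≤ (i:ℕ))]
        norm_num
      rw [hcast]
      ring
    · have hk := a3 ((i:ℕ)-(p+q-2)) (by
        have := i.isLt
        omega)
      rw [ty3, if_neg (by omega)] at hk
      have hidx : p + q - 2 + ((i:ℕ)-(p+q-2)) = (i:ℕ) := by omega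
      rw [hidx] at hk
      rw [← tvv_coe p q r v i, hk, wvec, if_neg (by omega), if_neg (by omega)]
      have hcast : (((i:ℕ)-(p+q-2) : ℕ):ℝ) = (i:ℝ) - ((p:ℝ) + q - 2) := by
        rw [Nat.cast_sub (by omega : p+q-2 ≤ (i:ℕ)), Nat.cast_sub (by omega : 2 ≤ p+q)]
        push_cast
        ring
      rw [hcast]
      ring

end Main

open Matrix

section Main2
variable (p q r : ℕ)

lemma cartan_symm (i j : Fin (p+q+r-2)) : cartanT p q r i j = cartanT p q r j i := by
  unfold cartanT tpqrAdj
  by_cases h : i = j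
  · subst h; rfl
  · rw [if_neg h, if_neg (Ne.symm h), Bool.or_comm]

lemma form_dot (v : Fin (p + q + r - 2) → ℝ) :
    cartanTForm p q r v
      = v ⬝ᵥ (((cartanT p q r).map (fun z => (z:ℝ))) *ᵥ v) := by
  unfold cartanTForm
  simp only [dotProduct, Matrix.mulVec, Matrix.map_apply, Finset.mul_sum]
  apply Finset.sum_congr rfl
  intro i _
  apply Finset.sum_congr rfl
  intro j _
  ring

lemma form_add (a b : Fin (p + q + r - 2) → ℝ) :
    cartanTForm p q r (a + b)
    = cartanTForm p q r a + cartanTForm p q r b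
      + 2 * (a ⬝ᵥ (((cartanT p q r).map (fun z => (z:ℝ))) *ᵥ b)) := by
  have hcross : (∑ i, ∑ j, b i * ((cartanT p q r i j : ℤ):ℝ) * a j)
      = (∑ i, ∑ j, a i * ((cartanT p q r i j : ℤ):ℝ) * b j) := by
    rw [Finset.sum_comm]
    apply Finset.sum_congr rfl; intro i _
    apply Finset.sum_congr rfl; intro j _
    rw [cartan_symm p q r j i]
    ring
  have hdot : (a ⬝ᵥ (((cartanT p q r).map (fun z => (z:ℝ))) *ᵥ b))
      = ∑ i, ∑ j, a i * ((cartanT p q r i j : ℤ):ℝ) * b j := by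
    simp only [dotProduct, Matrix.mulVec, Matrix.map_apply, Finset.mul_sum]
    apply Finset.sum_congr rfl; intro i _
    apply Finset.sum_congr rfl; intro j _
    ring
  have expand : cartanTForm p q r (a + b)
      = cartanTForm p q r a + cartanTForm p q r b
        + ((∑ i, ∑ j, a i * ((cartanT p q r i j : ℤ):ℝ) * b j)
          + (∑ i, ∑ j, b i * ((cartanT p q r i j : ℤ):ℝ) * a j)) := by
    unfold cartanTForm
    rw [← Finset.sum_add_distrib, ← Finset.sum_add_distrib, ← Finset.sum_add_distrib]
    apply Finset.sum_congr rfl; intro i _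
    rw [← Finset.sum_add_distrib, ← Finset.sum_add_distrib, ← Finset.sum_add_distrib]
    apply Finset.sum_congr rfl; intro j _
    simp only [Pi.add_apply]
    ring
  rw [expand, hcross, hdot]
  ring

lemma form_smul (t : ℝ) (x : Fin (p + q + r - 2) → ℝ) :
    cartanTForm p q r (t • x) = t^2 * cartanTForm p q r x := by
  unfold cartanTForm
  rw [Finset.mul_sum]
  apply Finset.sum_congr rfl; intro i _
  rw [Finset.mul_sum]
  apply Finset.sum_congr rfl; intro j _
  simp only [Pi.smul_apply, smul_eq_mul]
  ring

lemma mat_transpose :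
    ((cartanT p q r).map (fun z => (z:ℝ)))ᵀ = (cartanT p q r).map (fun z => (z:ℝ)) := by
  ext i j
  simp only [Matrix.transpose_apply, Matrix.map_apply]
  rw [cartan_symm p q r j i]

end Main2

theorem cartanT_affine_and_indefinite_cases (p q r : ℕ)
    (hp : 2 ≤ p) (hq : 2 ≤ q) (hr : 2 ≤ r) :
    ((1 : ℝ) / p + 1 / q + 1 / r = 1 →
      ((cartanT p q r).map (fun z => (z : ℝ))).rank = (p + q + r - 2) - 1 ∧
      (∀ v, 0 ≤ cartanTForm p q r v) ∧
      ¬ (∀ v, v ≠ 0 → 0 < cartanTForm p q r v)) ∧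
    ((1 : ℝ) / p + 1 / q + 1 / r < 1 →
      ((cartanT p q r).map (fun z => (z : ℝ))).rank = p + q + r - 2 ∧
      (∃ W : Submodule ℝ (Fin (p + q + r - 2) → ℝ),
        Module.finrank ℝ W = (p + q + r - 2) - 1 ∧
          ∀ v ∈ W, v ≠ 0 → 0 < cartanTForm p q r v) ∧
      (∃ w, cartanTForm p q r w < 0)) := by
  have hn4 : 4 ≤ p + q + r - 2 := by omega
  set M := (cartanT p q r).map (fun z => (z : ℝ)) with hM
  have hdim : Module.finrank ℝ (Fin (p + q + r - 2) → ℝ) = p + q + r - 2 := by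
    rw [Module.finrank_pi]
    exact Fintype.card_fin _
  have hw0 : wvec p q r ⟨0, by omega⟩ = (1:ℝ) := by
    rw [← tvv_zero p q r hp hq hr (wvec p q r), w0 p q r hp hq hr]
  have hwne : wvec p q r ≠ 0 := by
    intro h
    rw [h] at hw0
    simpa using hw0
  have hrankn := LinearMap.finrank_range_add_finrank_ker (M.mulVecLin)
  rw [hdim] at hrankn
  constructor
  · -- affine case
    intro hs
    have h0 : (1/(p:ℝ) + 1/(q:ℝ) + 1/(r:ℝ) - 1) = 0 := by
      rw [hs]; ring
    have hpsd : ∀ x, 0 ≤ cartanTForm p q r x := by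
      intro x
      have := form_ge p q r hp hq hr x
      rw [h0, zero_mul] at this
      exact this
    have hQw : cartanTForm p q r (wvec p q r) = 0 := by
      rw [form_w p q r hp hq hr, h0]
    refine ⟨?_, hpsd, ?_⟩
    · -- rank
      have hherm : M.IsHermitian := by
        unfold Matrix.IsHermitian
        ext i j
        simp only [Matrix.conjTranspose_apply, Matrix.map_apply, star_trivial, hM]
        rw [cartan_symm p q r j i]
      have hPSD : M.PosSemidef := by
        refine .of_dotProduct_mulVec_nonneg hherm fun x => ?_
        rw [star_trivial, ← form_dot]
        exact hpsd x
      have hwker : M *ᵥ wvec p q r = 0 := by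
        apply (hPSD.dotProduct_mulVec_zero_iff (wvec p q r)).mp
        rw [star_trivial, ← form_dot]
        exact hQw
      have hker : LinearMap.ker M.mulVecLin = Submodule.span ℝ {wvec p q r} := by
        apply le_antisymm
        · intro v hv
          rw [LinearMap.mem_ker, Matrix.mulVecLin_apply] at hv
          have hQv : cartanTForm p q r v = 0 := by
            rw [form_dot p q r v, hv, dotProduct_zero]
          have ht := form_tight p q r hp hq hr v (by rw [h0, zero_mul]; exact hQv)
          rw [Submodule.mem_span_singleton]
          refine ⟨tvv p q r v 0, ?_⟩
          funext i
          rw [Pi.smul_apply, smul_eq_mul, ← ht i]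
        · rw [Submodule.span_le, Set.singleton_subset_iff]
          rw [SetLike.mem_coe, LinearMap.mem_ker, Matrix.mulVecLin_apply]
          exact hwker
      have hkf : Module.finrank ℝ (LinearMap.ker M.mulVecLin) = 1 := by
        rw [hker]
        exact finrank_span_singleton hwne
      rw [hkf] at hrankn
      have : M.rank = Module.finrank ℝ (LinearMap.range M.mulVecLin) := rfl
      omega
    · intro hposdef
      have := hposdef (wvec p q r) hwne
      rw [hQw] at this
      exact lt_irrefl 0 this
  · -- hyperbolic case
    intro hs
    have hsneg : (1/(p:ℝ) + 1/(q:ℝ) + 1/(r:ℝ) - 1) < 0 := by linarith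
    have hQw : cartanTForm p q r (wvec p q r) < 0 := by
      rw [form_w p q r hp hq hr]; linarith
    have hkerbot : ∀ v, M *ᵥ v = 0 → v = 0 := by
      intro v hv
      have hQv : cartanTForm p q r v = 0 := by
        rw [form_dot p q r v, hv, dotProduct_zero]
      have hcc : tvv p q r v 0 = tvv p q r v 0 := rfl
      have hcross : v ⬝ᵥ (M *ᵥ ((-(tvv p q r v 0)) • wvec p q r)) = 0 := by
        rw [Matrix.dotProduct_mulVec, ← Matrix.mulVec_transpose, mat_transpose p q r, hv,
          zero_dotProduct]
      have hQu : cartanTForm p q r (v + (-(tvv p q r v 0)) • wvec p q r)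
          = (tvv p q r v 0)^2 * (1/(p:ℝ) + 1/(q:ℝ) + 1/(r:ℝ) - 1) := by
        rw [form_add p q r, form_smul p q r, form_w p q r hp hq hr, hQv, ← hM, hcross]
        ring
      have hu0 : tvv p q r (v + (-(tvv p q r v 0)) • wvec p q r) 0 = 0 := by
        rw [tvv_zero p q r hp hq hr]
        simp only [Pi.add_apply, Pi.smul_apply, smul_eq_mul, hw0]
        rw [← tvv_zero p q r hp hq hr v]
        ring
      have hge := form_ge p q r hp hq hr (v + (-(tvv p q r v 0)) • wvec p q r)
      rw [hu0, hQu] at hge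
      have h1 : 0 ≤ (tvv p q r v 0)^2 * (1/(p:ℝ) + 1/(q:ℝ) + 1/(r:ℝ) - 1) := by
        simpa using hge
      have hc0 : tvv p q r v 0 = 0 := by
        by_contra hcne
        have h2 : 0 < (tvv p q r v 0)^2 :=
          lt_of_le_of_ne (sq_nonneg _) (Ne.symm (pow_ne_zero 2 hcne))
        nlinarith
      have hQv' : cartanTForm p q r v
          = (1/(p:ℝ) + 1/(q:ℝ) + 1/(r:ℝ) - 1) * (tvv p q r v 0)^2 := by
        rw [hQv, hc0]
        ring
      have ht := form_tight p q r hp hq hr v hQv'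
      funext i
      rw [ht i, hc0, Pi.zero_apply]
      ring
    refine ⟨?_, ?_, ⟨wvec p q r, hQw⟩⟩
    · -- rank = n
      have hker : LinearMap.ker M.mulVecLin = ⊥ := by
        rw [Submodule.eq_bot_iff]
        intro v hv
        rw [LinearMap.mem_ker, Matrix.mulVecLin_apply] at hv
        exact hkerbot v hv
      rw [hker, finrank_bot] at hrankn
      have : M.rank = Module.finrank ℝ (LinearMap.range M.mulVecLin) := rfl
      omega
    · -- positive subspace
      obtain ⟨i0, hi0⟩ : ∃ i0 : Fin (p+q+r-2), i0 = ⟨0, by omega⟩ := ⟨⟨0, by omega⟩, rfl⟩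
      have hv00 : ∀ v : Fin (p+q+r-2) → ℝ, v i0 = tvv p q r v 0 := by
        intro v
        rw [tvv_zero p q r hp hq hr, hi0]
      refine ⟨LinearMap.ker (LinearMap.proj (R := ℝ)
        (φ := fun _ : Fin (p+q+r-2) => ℝ) i0), ?_, ?_⟩
      · have h1 := LinearMap.finrank_range_add_finrank_ker
          (LinearMap.proj (R := ℝ) (φ := fun _ : Fin (p+q+r-2) => ℝ) i0)
        have hsurj : LinearMap.range (LinearMap.proj (R := ℝ)
            (φ := fun _ : Fin (p+q+r-2) => ℝ) i0) = ⊤ := by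
          rw [LinearMap.range_eq_top]
          intro y
          exact ⟨fun _ => y, rfl⟩
        rw [hsurj, finrank_top, Module.finrank_self, hdim] at h1
        omega
      · intro v hv hvne
        rw [LinearMap.mem_ker] at hv
        have hv0 : v i0 = 0 := hv
        have hc0 : tvv p q r v 0 = 0 := by
          rw [← hv00 v]; exact hv0
        have hge := form_ge p q r hp hq hr v
        rw [hc0] at hge
        have hge' : 0 ≤ cartanTForm p q r v := by
          simpa using hge
        rcases lt_or_eq_of_le hge' with h | h
        · exact h
        · exfalso
          apply hvne
          have ht := form_tight p q r hp hq hr v (by rw [hc0, ← h]; ring)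
          funext i
          rw [ht i, hc0, Pi.zero_apply]
          ring
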